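/- arXiv:2108.12373 — 5 statements merged into one kernel-verified Lean document; each statement's English description precedes it below -/
import Mathlib

section
/- Suppose 0 < α < 1/λ₁, λ_k > 0, z_k^(0) ≠ 0 and ‖x^(0)‖ = 1. Then there exists a constant a₁ > 0 such that for all t ≥ 0, Σ_{l=1}^{k−1} (z_l^(t))² ≤ a₁ γ_k^t, where γ_k = (1/(1 + αλ_k))² < 1. In particular the lower-order coefficients z_1^(t), ..., z_{k−1}^(t) of the normalized generalized Krasulina iterate converge to 0 at a linear rate. -/
set_option autoImplicit false
set_option maxHeartbeats 1000000

open scoped RealInnerProductSpace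

/-- `matVec A v` is the matrix-vector product `A v`, viewed as a map on Euclidean space. -/
noncomputable def matVec {n : ℕ} (A : Matrix (Fin n) (Fin n) ℝ)
    (v : EuclideanSpace ℝ (Fin n)) : EuclideanSpace ℝ (Fin n) :=
  WithLp.toLp 2 (A.mulVec v)

lemma matVec_inner_symm {n : ℕ} (A : Matrix (Fin n) (Fin n) ℝ) (hA : A.IsSymm)
    (u v : EuclideanSpace ℝ (Fin n)) : ⟪matVec A u, v⟫ = ⟪u, matVec A v⟫ := by
  simp only [matVec, PiLp.inner_apply, RCLike.inner_apply, conj_trivial,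
    PiLp.toLp_apply, Matrix.mulVec, dotProduct]
  simp_rw [Finset.sum_mul, Finset.mul_sum]
  rw [Finset.sum_comm]
  refine Finset.sum_congr rfl fun i _ => Finset.sum_congr rfl fun j _ => ?_
  rw [← hA.apply i j]; ring

lemma inner_matVec_nonneg {n : ℕ} (A : Matrix (Fin n) (Fin n) ℝ) (hA : A.PosSemidef)
    (v : EuclideanSpace ℝ (Fin n)) : 0 ≤ ⟪v, matVec A v⟫ := by
  have := hA.dotProduct_mulVec_nonneg v
  simpa [matVec, PiLp.inner_apply, RCLike.inner_apply, dotProduct, mul_comm] using this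

/-- Rayleigh quotient. -/
noncomputable def Ray {n : ℕ} (A : Matrix (Fin n) (Fin n) ℝ)
    (v : EuclideanSpace ℝ (Fin n)) : ℝ := ⟪v, matVec A v⟫ / ‖v‖ ^ 2

/-- linear decay of the lower-order coefficients
`z_1^(t), …, z_{k-1}^(t)` of the normalized generalized Krasulina iterate.
Indices are 0-based: the 1-based eigenvalue `λ_j` is `lam ⟨j-1, _⟩`. -/
theorem krasulina_lower_coeff_decay
    {d : ℕ}
    (C : Matrix (Fin d) (Fin d) ℝ) (hCsymm : C.IsSymm) (hCpsd : C.PosSemidef)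
    (lam : Fin d → ℝ) (q : Fin d → EuclideanSpace ℝ (Fin d))
    (hq : Orthonormal ℝ q)
    (heig : ∀ l, matVec C (q l) = lam l • q l)
    (hmono : ∀ i j : Fin d, i ≤ j → lam j ≤ lam i)
    (hnn : ∀ l, 0 ≤ lam l)
    (k : ℕ) (hk1 : 1 ≤ k) (hkd : k ≤ d)
    (α : ℝ) (hα0 : 0 < α) (hα : α < 1 / lam ⟨0, by omega⟩)
    (hlamk : 0 < lam ⟨k - 1, by omega⟩)
    (x : ℕ → EuclideanSpace ℝ (Fin d)) (hxnz : ∀ t, x t ≠ 0)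
    (hupd : ∀ t, x (t + 1) = x t + α •
      (matVec C (x t) - (⟪x t, matVec C (x t)⟫ / ‖x t‖ ^ 2) • x t -
        ∑ p : Fin (k - 1),
          (lam (Fin.castLE (by omega) p) * ⟪q (Fin.castLE (by omega) p), x t⟫) •
            q (Fin.castLE (by omega) p)))
    (hinit : ⟪q ⟨k - 1, by omega⟩, ‖x 0‖⁻¹ • x 0⟫ ≠ 0) (hnorm : ‖x 0‖ = 1)
    (γ : ℝ) (hγ : γ = (1 / (1 + α * lam ⟨k - 1, by omega⟩)) ^ 2) :
    γ < 1 ∧ ∃ a₁ > (0 : ℝ), ∀ t : ℕ,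
      ∑ p : Fin (k - 1), ⟪q (Fin.castLE (by omega) p), ‖x t‖⁻¹ • x t⟫ ^ 2 ≤ a₁ * γ ^ t := by
  have hd : 0 < d := by omega
  have hkd' : k - 1 ≤ d := by omega
  set kk : Fin d := ⟨k - 1, by omega⟩ with hkkdef
  set ι0 : Fin d := ⟨0, hd⟩ with hι0def
  set cs : Fin (k - 1) → Fin d := Fin.castLE hkd' with hcs
  -- basic facts
  have hCq : ∀ (l : Fin d) (v : EuclideanSpace ℝ (Fin d)),
      ⟪q l, matVec C v⟫ = lam l * ⟪q l, v⟫ := by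
    intro l v
    rw [← matVec_inner_symm C hCsymm, heig l, real_inner_smul_left]
  have horth : ∀ i j : Fin d, ⟪q i, q j⟫ = if i = j then (1:ℝ) else 0 :=
    orthonormal_iff_ite.mp hq
  have hnx : ∀ t, 0 < ‖x t‖ := fun t => norm_pos_iff.2 (hxnz t)
  -- orthonormal basis
  haveI : Nonempty (Fin d) := ⟨ι0⟩
  have hcard : Fintype.card (Fin d) = Module.finrank ℝ (EuclideanSpace ℝ (Fin d)) := by
    rw [Fintype.card_fin]; exact finrank_euclideanSpace_fin.symm
  set B : OrthonormalBasis (Fin d) ℝ (EuclideanSpace ℝ (Fin d)) :=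
    (basisOfOrthonormalOfCardEqFinrank hq hcard).toOrthonormalBasis
      (by rwa [coe_basisOfOrthonormalOfCardEqFinrank]) with hBdef
  have hB : ∀ i, B i = q i := by
    intro i
    rw [hBdef, Module.Basis.coe_toOrthonormalBasis, coe_basisOfOrthonormalOfCardEqFinrank]
  have hexp : ∀ v w : EuclideanSpace ℝ (Fin d), ⟪v, w⟫ = ∑ l, ⟪v, q l⟫ * ⟪q l, w⟫ := by
    intro v w
    rw [← B.sum_inner_mul_inner v w]
    exact Finset.sum_congr rfl fun l _ => by rw [hB]
  -- Rayleigh quotient bounds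
  have hlam0 : 0 < lam ι0 := lt_of_lt_of_le hlamk (hmono ι0 kk (by rw [Fin.le_def]; exact Nat.zero_le _))
  have hαlam0 : α * lam ι0 < 1 := by
    rw [← lt_div_iff₀ hlam0] at *; exact hα
  have hray_nonneg : ∀ t, 0 ≤ Ray C (x t) := by
    intro t
    exact div_nonneg (inner_matVec_nonneg C hCpsd (x t)) (by positivity)
  have hray_le : ∀ t, Ray C (x t) ≤ lam ι0 := by
    intro t
    rw [Ray, div_le_iff₀ (pow_pos (hnx t) 2)]
    have h1 : ⟪x t, matVec C (x t)⟫ = ∑ l, lam l * ⟪q l, x t⟫ ^ 2 := by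
      rw [hexp]
      refine Finset.sum_congr rfl fun l _ => ?_
      rw [hCq, real_inner_comm (x t) (q l)]; ring
    have h2 : ‖x t‖ ^ 2 = ∑ l, ⟪q l, x t⟫ ^ 2 := by
      rw [← real_inner_self_eq_norm_sq, hexp]
      refine Finset.sum_congr rfl fun l _ => ?_
      rw [real_inner_comm (x t) (q l)]; ring
    rw [h1, h2, Finset.mul_sum]
    refine Finset.sum_le_sum fun l _ => ?_
    exact mul_le_mul_of_nonneg_right (hmono ι0 l (by rw [Fin.le_def]; exact Nat.zero_le _)) (sq_nonneg _)
  have hu_pos : ∀ t, 0 < 1 - α * Ray C (x t) := by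
    intro t
    have : α * Ray C (x t) ≤ α * lam ι0 :=
      mul_le_mul_of_nonneg_left (hray_le t) hα0.le
    linarith
  have hu_le : ∀ t, 1 - α * Ray C (x t) ≤ 1 := by
    intro t
    have : 0 ≤ α * Ray C (x t) := mul_nonneg hα0.le (hray_nonneg t)
    linarith
  -- recurrence for coefficients
  have hstep : ∀ t (l : Fin d), ⟪q l, x (t + 1)⟫ =
      ⟪q l, x t⟫ + α * ((lam l - Ray C (x t)) * ⟪q l, x t⟫ -
        ∑ p : Fin (k - 1), (lam (cs p) * ⟪q (cs p), x t⟫) * (if l = cs p then (1:ℝ) else 0)) := by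
    intro t l
    rw [hupd t]
    simp only [inner_add_right, real_inner_smul_right, inner_sub_right, inner_sum, hCq, horth]
    rw [Ray]
    ring_nf
  have hstep_low : ∀ t (p : Fin (k - 1)), ⟪q (cs p), x (t + 1)⟫ =
      (1 - α * Ray C (x t)) * ⟪q (cs p), x t⟫ := by
    intro t p
    rw [hstep t (cs p)]
    have hsum : ∑ p' : Fin (k - 1), (lam (cs p') * ⟪q (cs p'), x t⟫) *
        (if cs p = cs p' then (1:ℝ) else 0) = lam (cs p) * ⟪q (cs p), x t⟫ := by
      rw [Finset.sum_eq_single p]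
      · simp
      · intro b _ hb
        rw [if_neg, mul_zero]
        intro habs
        exact hb (by
          apply Fin.ext
          have : (cs p).val = (cs b).val := by rw [habs]
          simpa [hcs] using this.symm)
      · intro h; exact absurd (Finset.mem_univ p) h
    rw [hsum]; ring
  have hstep_kk : ∀ t, ⟪q kk, x (t + 1)⟫ =
      ((1 - α * Ray C (x t)) + α * lam kk) * ⟪q kk, x t⟫ := by
    intro t
    rw [hstep t kk]
    have hsum : ∑ p' : Fin (k - 1), (lam (cs p') * ⟪q (cs p'), x t⟫) *
        (if kk = cs p' then (1:ℝ) else 0) = 0 := by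
      refine Finset.sum_eq_zero fun p' _ => ?_
      rw [if_neg, mul_zero]
      intro habs
      have : kk.val = (cs p').val := by rw [habs]
      have hlt : p'.val < k - 1 := p'.isLt
      simp [hcs, hkkdef] at this
      omega
    rw [hsum]; ring
  -- constants
  set c : ℝ := α * lam kk with hcdef
  have hc : 0 < c := mul_pos hα0 hlamk
  have h1c : (0:ℝ) < 1 + c := by linarith
  have hγ0 : 0 ≤ γ := by rw [hγ]; positivity
  have hγ1 : γ < 1 := by
    rw [hγ]
    have h1 : 1 / (1 + c) < 1 := by
      rw [div_lt_one h1c]; linarith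
    have h2 : 0 ≤ 1 / (1 + c) := by positivity
    calc (1 / (1 + c)) ^ 2 ≤ (1 / (1 + c)) * 1 := by nlinarith
      _ < 1 := by nlinarith
  have key : ∀ u : ℝ, 0 < u → u ≤ 1 → u ^ 2 ≤ γ * (u + c) ^ 2 := by
    intro u hu hu1
    rw [hγ]
    have huc : u * (1 + c) ≤ u + c := by nlinarith
    have ha : 0 < u * (1 + c) := mul_pos hu h1c
    have hsq := mul_self_le_mul_self ha.le huc
    rw [one_div, inv_pow, inv_mul_eq_div, le_div_iff₀ (pow_pos h1c 2)]
    nlinarith [hsq]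
  have hinit' : ⟪q kk, x 0⟫ ≠ 0 := by
    simpa [hnorm] using hinit
  -- main induction
  have main : ∀ t, ⟪q kk, x t⟫ ≠ 0 ∧ ∀ p : Fin (k - 1),
      ⟪q (cs p), x t⟫ ^ 2 * ⟪q kk, x 0⟫ ^ 2 ≤
        γ ^ t * ⟪q (cs p), x 0⟫ ^ 2 * ⟪q kk, x t⟫ ^ 2 := by
    intro t
    induction t with
    | zero => exact ⟨hinit', fun p => by rw [pow_zero, one_mul]⟩
    | succ t ih =>
      obtain ⟨hz, hle⟩ := ih
      have hupos := hu_pos t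
      have hule := hu_le t
      have hucpos : 0 < (1 - α * Ray C (x t)) + c := by linarith
      constructor
      · rw [hstep_kk t]
        exact mul_ne_zero (ne_of_gt hucpos) hz
      · intro p
        have h1 := hle p
        have hkey := key _ hupos hule
        calc ⟪q (cs p), x (t+1)⟫ ^ 2 * ⟪q kk, x 0⟫ ^ 2
            = (1 - α * Ray C (x t)) ^ 2 * (⟪q (cs p), x t⟫ ^ 2 * ⟪q kk, x 0⟫ ^ 2) := by
              rw [hstep_low t p]; ring
          _ ≤ (1 - α * Ray C (x t)) ^ 2 * (γ ^ t * ⟪q (cs p), x 0⟫ ^ 2 * ⟪q kk, x t⟫ ^ 2) := by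
              exact mul_le_mul_of_nonneg_left h1 (sq_nonneg _)
          _ ≤ (γ * ((1 - α * Ray C (x t)) + c) ^ 2) *
                (γ ^ t * ⟪q (cs p), x 0⟫ ^ 2 * ⟪q kk, x t⟫ ^ 2) := by
              refine mul_le_mul_of_nonneg_right hkey ?_
              have : (0:ℝ) ≤ γ ^ t := pow_nonneg hγ0 t
              positivity
          _ = γ ^ (t+1) * ⟪q (cs p), x 0⟫ ^ 2 * ⟪q kk, x (t+1)⟫ ^ 2 := by
              rw [hstep_kk t]; ring
  -- conclusion
  refine ⟨hγ1, 1 + ∑ p : Fin (k - 1), ⟪q (cs p), x 0⟫ ^ 2 / ⟪q kk, x 0⟫ ^ 2, by positivity, fun t => ?_⟩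
  have hzkk : (0:ℝ) < ⟪q kk, x t⟫ ^ 2 := by
    have := (main t).1
    positivity
  have hzkk0 : (0:ℝ) < ⟪q kk, x 0⟫ ^ 2 := by positivity
  have hCS : ⟪q kk, x t⟫ ^ 2 ≤ ‖x t‖ ^ 2 := by
    have h := abs_real_inner_le_norm (q kk) (x t)
    have h2 : |⟪q kk, x t⟫| ^ 2 ≤ (‖q kk‖ * ‖x t‖) ^ 2 :=
      pow_le_pow_left₀ (abs_nonneg _) h 2
    rw [sq_abs] at h2
    rw [hq.1 kk] at h2
    simpa using h2
  have hterm : ∀ p : Fin (k - 1), ⟪q (cs p), ‖x t‖⁻¹ • x t⟫ ^ 2 ≤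
      γ ^ t * (⟪q (cs p), x 0⟫ ^ 2 / ⟪q kk, x 0⟫ ^ 2) := by
    intro p
    have e1 : ⟪q (cs p), ‖x t‖⁻¹ • x t⟫ ^ 2 = ⟪q (cs p), x t⟫ ^ 2 / ‖x t‖ ^ 2 := by
      rw [real_inner_smul_right, mul_pow, inv_pow, inv_mul_eq_div]
    rw [e1]
    have stepA : ⟪q (cs p), x t⟫ ^ 2 / ‖x t‖ ^ 2 ≤ ⟪q (cs p), x t⟫ ^ 2 / ⟪q kk, x t⟫ ^ 2 :=
      div_le_div_of_nonneg_left (sq_nonneg _) hzkk hCS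
    refine le_trans stepA ?_
    rw [mul_div_assoc', div_le_div_iff₀ hzkk hzkk0]
    have h := (main t).2 p
    linarith
  calc ∑ p : Fin (k - 1), ⟪q (cs p), ‖x t‖⁻¹ • x t⟫ ^ 2
      ≤ ∑ p : Fin (k - 1), γ ^ t * (⟪q (cs p), x 0⟫ ^ 2 / ⟪q kk, x 0⟫ ^ 2) :=
        Finset.sum_le_sum fun p _ => hterm p
    _ = γ ^ t * ∑ p : Fin (k - 1), ⟪q (cs p), x 0⟫ ^ 2 / ⟪q kk, x 0⟫ ^ 2 := by
        rw [Finset.mul_sum]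
    _ ≤ γ ^ t * (1 + ∑ p : Fin (k - 1), ⟪q (cs p), x 0⟫ ^ 2 / ⟪q kk, x 0⟫ ^ 2) := by
        refine mul_le_mul_of_nonneg_left ?_ (pow_nonneg hγ0 t)
        linarith
    _ = (1 + ∑ p : Fin (k - 1), ⟪q (cs p), x 0⟫ ^ 2 / ⟪q kk, x 0⟫ ^ 2) * γ ^ t := by ring
end

section
/- Suppose 0 < α < 1/λ₁, λ_k > λ_{k+1}, z_k^(0) ≠ 0 and ‖x^(0)‖ = 1. Then there exists a constant a₂ > 0 such that for all t ≥ 0, Σ_{l=k+1}^{d} (z_l^(t))² ≤ a₂ ρ_k^t, where ρ_k = ((1 + αλ_{k+1})/(1 + αλ_k))² < 1. In particular the higher-order coefficients z_{k+1}^(t), ..., z_d^(t) of the normalized generalized Krasulina iterate converge to 0 at a linear rate. -/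
set_option autoImplicit false

open scoped RealInnerProductSpace

set_option maxHeartbeats 1000000 in
/-- linear decay of the higher-order coefficients
`z_{k+1}^(t), …, z_d^(t)` of the normalized generalized Krasulina iterate.
Indices are 0-based: the 1-based eigenvalue `λ_j` is `lam ⟨j-1, _⟩`, so the 1-based
range `l ∈ {k+1, …, d}` corresponds to the 0-based indices `l` with `k ≤ (l : ℕ)`. -/
theorem krasulina_upper_coeff_decay
    {d : ℕ}
    (C : Matrix (Fin d) (Fin d) ℝ) (hCsymm : C.IsSymm) (hCpsd : C.PosSemidef)
    (lam : Fin d → ℝ) (q : Fin d → EuclideanSpace ℝ (Fin d))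
    (hq : Orthonormal ℝ q)
    (heig : ∀ l, matVec C (q l) = lam l • q l)
    (hmono : ∀ i j : Fin d, i ≤ j → lam j ≤ lam i)
    (hnn : ∀ l, 0 ≤ lam l)
    (k : ℕ) (hk1 : 1 ≤ k) (hkd : k < d)
    (α : ℝ) (hα0 : 0 < α) (hα : α < 1 / lam ⟨0, by omega⟩)
    (hgap : lam ⟨k, by omega⟩ < lam ⟨k - 1, by omega⟩)
    (x : ℕ → EuclideanSpace ℝ (Fin d)) (hxnz : ∀ t, x t ≠ 0)
    (hupd : ∀ t, x (t + 1) = x t + α •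
      (matVec C (x t) - (⟪x t, matVec C (x t)⟫ / ‖x t‖ ^ 2) • x t -
        ∑ p : Fin (k - 1),
          (lam (Fin.castLE (by omega) p) * ⟪q (Fin.castLE (by omega) p), x t⟫) •
            q (Fin.castLE (by omega) p)))
    (hinit : ⟪q ⟨k - 1, by omega⟩, ‖x 0‖⁻¹ • x 0⟫ ≠ 0) (hnorm : ‖x 0‖ = 1)
    (ρ : ℝ) (hρ : ρ = ((1 + α * lam ⟨k, by omega⟩) / (1 + α * lam ⟨k - 1, by omega⟩)) ^ 2) :
    ρ < 1 ∧ ∃ a₂ > (0 : ℝ), ∀ t : ℕ,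
      ∑ l ∈ Finset.univ.filter (fun l : Fin d => k ≤ (l : ℕ)),
        ⟪q l, ‖x t‖⁻¹ • x t⟫ ^ 2 ≤ a₂ * ρ ^ t := by
  classical
  have hd0 : 0 < d := by omega
  set P : Fin d := ⟨k - 1, by omega⟩ with hP
  set K : Fin d := ⟨k, by omega⟩ with hK
  have hρ' : ρ = ((1 + α * lam K) / (1 + α * lam P)) ^ 2 := hρ
  have hgap' : lam K < lam P := hgap
  have hxpos : ∀ t, 0 < ‖x t‖ := fun t => norm_pos_iff.mpr (hxnz t)
  -- inner product equals dot product
  have hip : ∀ u v : EuclideanSpace ℝ (Fin d),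
      ⟪u, v⟫ = dotProduct (u : Fin d → ℝ) (v : Fin d → ℝ) := by
    intro u v
    simp [PiLp.inner_apply, dotProduct, RCLike.inner_apply, mul_comm]
  -- self-adjointness of matVec C
  have hsym : ∀ u v : EuclideanSpace ℝ (Fin d), ⟪matVec C u, v⟫ = ⟪u, matVec C v⟫ := by
    intro u v
    rw [hip, hip]
    show dotProduct (C.mulVec u) v = dotProduct u (C.mulVec v)
    rw [Matrix.dotProduct_mulVec, ← Matrix.mulVec_transpose, hCsymm.eq]
  have hqC : ∀ (l : Fin d) (v : EuclideanSpace ℝ (Fin d)),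
      ⟪q l, matVec C v⟫ = lam l * ⟪q l, v⟫ := by
    intro l v
    rw [← hsym, heig, real_inner_smul_left]
  -- orthonormal basis
  have : Nonempty (Fin d) := ⟨⟨0, hd0⟩⟩
  set b : OrthonormalBasis (Fin d) ℝ (EuclideanSpace ℝ (Fin d)) :=
    (basisOfOrthonormalOfCardEqFinrank hq (by simp)).toOrthonormalBasis
      (by rwa [coe_basisOfOrthonormalOfCardEqFinrank]) with hb
  have hbq : ∀ l, b l = q l := by
    intro l
    rw [hb, Module.Basis.coe_toOrthonormalBasis, coe_basisOfOrthonormalOfCardEqFinrank]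
  -- Parseval
  have hpars : ∀ v : EuclideanSpace ℝ (Fin d), ∑ l, ⟪q l, v⟫ ^ 2 = ‖v‖ ^ 2 := by
    intro v
    calc ∑ l, ⟪q l, v⟫ ^ 2 = ∑ l, ⟪v, b l⟫ * ⟪b l, v⟫ := by
          refine Finset.sum_congr rfl fun l _ => ?_
          rw [hbq, real_inner_comm]; ring
      _ = ⟪v, v⟫ := b.sum_inner_mul_inner v v
      _ = ‖v‖ ^ 2 := real_inner_self_eq_norm_sq v
  -- Rayleigh expansion
  have hray : ∀ v : EuclideanSpace ℝ (Fin d),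
      ⟪v, matVec C v⟫ = ∑ l, lam l * ⟪q l, v⟫ ^ 2 := by
    intro v
    rw [← b.sum_inner_mul_inner v (matVec C v)]
    refine Finset.sum_congr rfl fun l _ => ?_
    rw [hbq, hqC, real_inner_comm]; ring
  -- the Rayleigh quotient β
  obtain ⟨β, hβdef⟩ : ∃ β : ℕ → ℝ, ∀ t, β t = ⟪x t, matVec C (x t)⟫ / ‖x t‖ ^ 2 :=
    ⟨_, fun t => rfl⟩
  have hβ0 : ∀ t, 0 ≤ β t := by
    intro t
    rw [hβdef]
    apply div_nonneg _ (sq_nonneg _)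
    rw [hip]
    have := hCpsd.dotProduct_mulVec_nonneg (x t : Fin d → ℝ)
    simp only [star_trivial] at this
    exact this
  have hal0 : α * lam ⟨0, hd0⟩ < 1 := by
    rcases eq_or_lt_of_le (hnn ⟨0, hd0⟩) with h | h
    · rw [← h] at hα
      simp at hα
      linarith
    · rw [lt_div_iff₀ h] at hα
      linarith
  have hβle : ∀ t, β t ≤ lam ⟨0, hd0⟩ := by
    intro t
    rw [hβdef, div_le_iff₀ (pow_pos (hxpos t) 2)]
    rw [hray, ← hpars (x t), Finset.mul_sum]
    refine Finset.sum_le_sum fun l _ => ?_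
    have h1 : lam l ≤ lam ⟨0, hd0⟩ := hmono ⟨0, hd0⟩ l (by simp [Fin.le_def])
    nlinarith [sq_nonneg (⟪q l, x t⟫ : ℝ)]
  -- the coefficients z
  obtain ⟨z, hzdef⟩ : ∃ z : Fin d → ℕ → ℝ, ∀ l t, z l t = ⟪q l, x t⟫ :=
    ⟨_, fun _ _ => rfl⟩
  -- recurrence for coefficients with index ≥ k-1
  have hrec : ∀ (l : Fin d), k - 1 ≤ (l : ℕ) →
      ∀ t, z l (t + 1) = (1 + α * (lam l - β t)) * z l t := by
    intro l hl t
    have hsum0 : ⟪q l, ∑ p : Fin (k - 1),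
        (lam (Fin.castLE (by omega) p) * ⟪q (Fin.castLE (by omega) p), x t⟫) •
          q (Fin.castLE (by omega) p)⟫ = 0 := by
      rw [inner_sum]
      refine Finset.sum_eq_zero fun p' _ => ?_
      rw [real_inner_smul_right, hq.2 (by
        refine Fin.ne_of_val_ne ?_
        simp only [Fin.coe_castLE]
        have := p'.2
        omega), mul_zero]
    rw [hzdef, hzdef, hupd t, inner_add_right, real_inner_smul_right, inner_sub_right,
      inner_sub_right, real_inner_smul_right, hqC, hsum0, ← hβdef t]
    ring
  -- positivity of the factors
  have hfpos : ∀ (l : Fin d) (t : ℕ), 0 < 1 + α * (lam l - β t) := by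
    intro l t
    have h1 := hβle t
    have h2 := mul_nonneg hα0.le (hnn l)
    have h3 := mul_le_mul_of_nonneg_left h1 hα0.le
    nlinarith
  -- pivot coefficient stays nonzero
  have hz00 : z P 0 ≠ 0 := by
    rw [hzdef]
    simpa [hnorm] using hinit
  have hzPne : ∀ t, z P t ≠ 0 := by
    intro t
    induction t with
    | zero => exact hz00
    | succ t ih =>
      rw [hrec P (le_refl _) t]
      exact mul_ne_zero (ne_of_gt (hfpos P t)) ih
  have hBpos : 0 < 1 + α * lam P := by nlinarith [mul_nonneg hα0.le (hnn P)]
  have hApos : 0 < 1 + α * lam K := by nlinarith [mul_nonneg hα0.le (hnn K)]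
  have hρpos : 0 ≤ ρ := hρ' ▸ sq_nonneg _
  have hρlt1 : ρ < 1 := by
    rw [hρ']
    have h1 : (1 + α * lam K) / (1 + α * lam P) < 1 := by
      rw [div_lt_one hBpos]
      nlinarith
    have h2 : 0 ≤ (1 + α * lam K) / (1 + α * lam P) := le_of_lt (div_pos hApos hBpos)
    nlinarith
  -- factor ratio bound
  have hfact : ∀ (l : Fin d), k ≤ (l : ℕ) → ∀ t,
      (1 + α * (lam l - β t)) ^ 2 ≤ ρ * (1 + α * (lam P - β t)) ^ 2 := by
    intro l hl t
    have hlk : lam l ≤ lam K := hmono K l (by rw [Fin.le_def]; exact hl)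
    have hkp : lam K ≤ lam P := hmono P K (by rw [Fin.le_def]; show k - 1 ≤ k; omega)
    have hβ0t := hβ0 t
    have hlin : (1 + α * (lam l - β t)) * (1 + α * lam P) ≤
        (1 + α * lam K) * (1 + α * (lam P - β t)) := by
      nlinarith [mul_nonneg (mul_nonneg hα0.le (sub_nonneg.2 hlk)) hBpos.le,
        mul_nonneg (mul_nonneg hα0.le hβ0t) (mul_nonneg hα0.le (sub_nonneg.2 hkp))]
    have hflnn : 0 ≤ 1 + α * (lam l - β t) := (hfpos l t).le
    have hsq := mul_self_le_mul_self (mul_nonneg hflnn hBpos.le) hlin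
    rw [hρ', div_pow, div_mul_eq_mul_div, le_div_iff₀ (pow_pos hBpos 2)]
    nlinarith [hsq]
  -- main induction
  have key : ∀ (l : Fin d), k ≤ (l : ℕ) → ∀ t,
      (z l t) ^ 2 * (z P 0) ^ 2 ≤ ρ ^ t * ((z l 0) ^ 2 * (z P t) ^ 2) := by
    intro l hl t
    induction t with
    | zero => simp
    | succ t ih =>
      rw [hrec l (by omega) t, hrec P (le_refl _) t]
      calc ((1 + α * (lam l - β t)) * z l t) ^ 2 * (z P 0) ^ 2
          = (1 + α * (lam l - β t)) ^ 2 * ((z l t) ^ 2 * (z P 0) ^ 2) := by ring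
        _ ≤ (ρ * (1 + α * (lam P - β t)) ^ 2) * (ρ ^ t * ((z l 0) ^ 2 * (z P t) ^ 2)) := by
            refine mul_le_mul (hfact l hl t) ih (by positivity) ?_
            exact mul_nonneg hρpos (sq_nonneg _)
        _ = ρ ^ (t + 1) * ((z l 0) ^ 2 * ((1 + α * (lam P - β t)) * z P t) ^ 2) := by ring
  have hzP2pos : 0 < (z P 0) ^ 2 := (sq_nonneg _).lt_of_ne' (pow_ne_zero 2 hz00)
  have hzp_le : ∀ t, (z P t) ^ 2 ≤ ‖x t‖ ^ 2 := by
    intro t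
    rw [← hpars (x t), hzdef]
    exact Finset.single_le_sum (f := fun i => (⟪q i, x t⟫ : ℝ) ^ 2)
      (fun i _ => sq_nonneg _) (Finset.mem_univ P)
  -- per-term final bound
  have hfinal : ∀ (l : Fin d), k ≤ (l : ℕ) → ∀ t,
      ⟪q l, ‖x t‖⁻¹ • x t⟫ ^ 2 ≤ ρ ^ t * ((z l 0) ^ 2 / (z P 0) ^ 2) := by
    intro l hl t
    have h1 := key l hl t
    have h2 : ρ ^ t * ((z l 0) ^ 2 * (z P t) ^ 2) ≤ ρ ^ t * ((z l 0) ^ 2 * ‖x t‖ ^ 2) := by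
      refine mul_le_mul_of_nonneg_left ?_ (pow_nonneg hρpos t)
      exact mul_le_mul_of_nonneg_left (hzp_le t) (sq_nonneg _)
    have hLHS : ⟪q l, ‖x t‖⁻¹ • x t⟫ ^ 2 = (z l t) ^ 2 / ‖x t‖ ^ 2 := by
      rw [real_inner_smul_right, ← hzdef l t]
      field_simp
    rw [hLHS, div_le_iff₀ (pow_pos (hxpos t) 2),
      show ρ ^ t * ((z l 0) ^ 2 / (z P 0) ^ 2) * ‖x t‖ ^ 2
        = (ρ ^ t * ((z l 0) ^ 2 * ‖x t‖ ^ 2)) / (z P 0) ^ 2 by ring,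
      le_div_iff₀ hzP2pos]
    calc (z l t) ^ 2 * (z P 0) ^ 2 ≤ ρ ^ t * ((z l 0) ^ 2 * (z P t) ^ 2) := h1
      _ ≤ ρ ^ t * ((z l 0) ^ 2 * ‖x t‖ ^ 2) := h2
  refine ⟨hρlt1,
    (∑ l ∈ Finset.univ.filter (fun l : Fin d => k ≤ (l : ℕ)), (z l 0) ^ 2 / (z P 0) ^ 2) + 1,
    ?_, ?_⟩
  · have hS : 0 ≤ ∑ l ∈ Finset.univ.filter (fun l : Fin d => k ≤ (l : ℕ)),
        (z l 0) ^ 2 / (z P 0) ^ 2 :=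
      Finset.sum_nonneg fun l _ => div_nonneg (sq_nonneg _) (sq_nonneg _)
    linarith
  · intro t
    have hρt : 0 ≤ ρ ^ t := pow_nonneg hρpos t
    calc ∑ l ∈ Finset.univ.filter (fun l : Fin d => k ≤ (l : ℕ)), ⟪q l, ‖x t‖⁻¹ • x t⟫ ^ 2
        ≤ ∑ l ∈ Finset.univ.filter (fun l : Fin d => k ≤ (l : ℕ)),
            ρ ^ t * ((z l 0) ^ 2 / (z P 0) ^ 2) := by
          refine Finset.sum_le_sum fun l hl => ?_
          exact hfinal l (Finset.mem_filter.mp hl).2 t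
      _ = ρ ^ t * ∑ l ∈ Finset.univ.filter (fun l : Fin d => k ≤ (l : ℕ)),
            (z l 0) ^ 2 / (z P 0) ^ 2 := by rw [Finset.mul_sum]
      _ ≤ ((∑ l ∈ Finset.univ.filter (fun l : Fin d => k ≤ (l : ℕ)),
            (z l 0) ^ 2 / (z P 0) ^ 2) + 1) * ρ ^ t := by nlinarith
end

section
/- The Krasulina pseudo-gradient map h is Lipschitz continuous with Lipschitz constant L₁ = 6λ₁ on the set of nonzero vectors: for all nonzero v₁, v₂ ∈ ℝ^d, ‖h(v₁) − h(v₂)‖ ≤ 6λ₁ ‖v₁ − v₂‖. -/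
set_option autoImplicit false

open scoped RealInnerProductSpace

lemma matVec_sub {n : ℕ} (A : Matrix (Fin n) (Fin n) ℝ) (v w : EuclideanSpace ℝ (Fin n)) :
    matVec A (v - w) = matVec A v - matVec A w := by
  show WithLp.toLp 2 (A.mulVec (v - w).ofLp) = WithLp.toLp 2 (A.mulVec v.ofLp) - WithLp.toLp 2 (A.mulVec w.ofLp)
  rw [WithLp.ofLp_sub, Matrix.mulVec_sub]; rfl

lemma matVec_smul {n : ℕ} (A : Matrix (Fin n) (Fin n) ℝ) (c : ℝ) (v : EuclideanSpace ℝ (Fin n)) :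
    matVec A (c • v) = c • matVec A v := by
  show WithLp.toLp 2 (A.mulVec (c • v).ofLp) = c • WithLp.toLp 2 (A.mulVec v.ofLp)
  rw [WithLp.ofLp_smul, Matrix.mulVec_smul]; rfl

/-- the Krasulina pseudo-gradient map `h(v) = Cv - (vᵀCv/‖v‖²)v`
is Lipschitz with constant `6λ₁` on nonzero vectors, where `‖C‖ ≤ λ₁` is the
spectral-norm bound on the symmetric PSD matrix `C`. -/
theorem krasulina_pseudograd_lipschitz
    {d : ℕ}
    (C : Matrix (Fin d) (Fin d) ℝ) (hCsymm : C.IsSymm) (hCpsd : C.PosSemidef)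
    (lam1 : ℝ) (hlam1 : 0 < lam1)
    (hCnorm : ∀ v : EuclideanSpace ℝ (Fin d), ‖matVec C v‖ ≤ lam1 * ‖v‖)
    (v₁ v₂ : EuclideanSpace ℝ (Fin d)) (hv₁ : v₁ ≠ 0) (hv₂ : v₂ ≠ 0) :
    ‖(matVec C v₁ - (⟪v₁, matVec C v₁⟫ / ‖v₁‖ ^ 2) • v₁) -
        (matVec C v₂ - (⟪v₂, matVec C v₂⟫ / ‖v₂‖ ^ 2) • v₂)‖ ≤
      6 * lam1 * ‖v₁ - v₂‖ := by
  have hn1 : (0:ℝ) < ‖v₁‖ := norm_pos_iff.mpr hv₁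
  have hn2 : (0:ℝ) < ‖v₂‖ := norm_pos_iff.mpr hv₂
  set r₁ : ℝ := ⟪v₁, matVec C v₁⟫ / ‖v₁‖ ^ 2 with hr₁
  set r₂ : ℝ := ⟪v₂, matVec C v₂⟫ / ‖v₂‖ ^ 2 with hr₂
  set u₁ : EuclideanSpace ℝ (Fin d) := (‖v₁‖)⁻¹ • v₁ with hu₁
  set u₂ : EuclideanSpace ℝ (Fin d) := (‖v₂‖)⁻¹ • v₂ with hu₂
  have hnu₁ : ‖u₁‖ = 1 := by
    rw [hu₁, norm_smul]; simp [abs_of_pos (inv_pos.mpr hn1)]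
    field_simp
  have hnu₂ : ‖u₂‖ = 1 := by
    rw [hu₂, norm_smul]; simp [abs_of_pos (inv_pos.mpr hn2)]
    field_simp
  -- r_i as Rayleigh quotient of unit vector
  have hru : ∀ (v : EuclideanSpace ℝ (Fin d)), v ≠ 0 →
      ⟪v, matVec C v⟫ / ‖v‖ ^ 2 = ⟪(‖v‖)⁻¹ • v, matVec C ((‖v‖)⁻¹ • v)⟫ := by
    intro v hv
    have hn : (0:ℝ) < ‖v‖ := norm_pos_iff.mpr hv
    rw [matVec_smul, real_inner_smul_left, real_inner_smul_right]
    set x := ⟪v, matVec C v⟫ with hx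
    field_simp
  have hr₁u : r₁ = ⟪u₁, matVec C u₁⟫ := by rw [hr₁, hu₁]; exact hru v₁ hv₁
  have hr₂u : r₂ = ⟪u₂, matVec C u₂⟫ := by rw [hr₂, hu₂]; exact hru v₂ hv₂
  -- |r₁| ≤ lam1
  have habsr : ∀ (u : EuclideanSpace ℝ (Fin d)), ‖u‖ = 1 → |⟪u, matVec C u⟫| ≤ lam1 := by
    intro u hu
    calc |⟪u, matVec C u⟫| ≤ ‖u‖ * ‖matVec C u‖ := abs_real_inner_le_norm u _
      _ ≤ ‖u‖ * (lam1 * ‖u‖) := by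
          exact mul_le_mul_of_nonneg_left (hCnorm u) (norm_nonneg u)
      _ = lam1 := by rw [hu]; ring
  have habsr₁ : |r₁| ≤ lam1 := by rw [hr₁u]; exact habsr u₁ hnu₁
  -- |r₁ - r₂| ≤ 2 lam1 ‖u₁ - u₂‖
  have hsplit : r₁ - r₂ = ⟪u₁, matVec C (u₁ - u₂)⟫ + ⟪u₁ - u₂, matVec C u₂⟫ := by
    rw [hr₁u, hr₂u, matVec_sub, inner_sub_right, inner_sub_left]
    ring
  have habsdiff : |r₁ - r₂| ≤ 2 * lam1 * ‖u₁ - u₂‖ := by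
    rw [hsplit]
    calc |⟪u₁, matVec C (u₁ - u₂)⟫ + ⟪u₁ - u₂, matVec C u₂⟫|
        ≤ |⟪u₁, matVec C (u₁ - u₂)⟫| + |⟪u₁ - u₂, matVec C u₂⟫| := abs_add_le _ _
      _ ≤ ‖u₁‖ * ‖matVec C (u₁ - u₂)‖ + ‖u₁ - u₂‖ * ‖matVec C u₂‖ := by
          exact add_le_add (abs_real_inner_le_norm _ _) (abs_real_inner_le_norm _ _)
      _ ≤ ‖u₁‖ * (lam1 * ‖u₁ - u₂‖) + ‖u₁ - u₂‖ * (lam1 * ‖u₂‖) := by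
          exact add_le_add (mul_le_mul_of_nonneg_left (hCnorm _) (norm_nonneg _))
            (mul_le_mul_of_nonneg_left (hCnorm _) (norm_nonneg _))
      _ = 2 * lam1 * ‖u₁ - u₂‖ := by rw [hnu₁, hnu₂]; ring
  -- ‖u₁ - u₂‖ * ‖v₂‖ ≤ 2 ‖v₁ - v₂‖
  have hkey2 : ‖u₁ - u₂‖ * ‖v₂‖ ≤ 2 * ‖v₁ - v₂‖ := by
    have h1 : ‖v₂‖ • (u₁ - u₂) = (v₁ - v₂) + ((‖v₂‖ / ‖v₁‖ - 1) • v₁) := by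
      rw [hu₁, hu₂, smul_sub, smul_smul, smul_smul]
      rw [mul_inv_cancel₀ hn2.ne', sub_smul, one_smul]
      rw [div_eq_mul_inv]
      module
    have h2 : ‖(‖v₂‖ / ‖v₁‖ - 1) • v₁‖ = |‖v₂‖ - ‖v₁‖| := by
      rw [norm_smul, Real.norm_eq_abs]
      rw [show ‖v₂‖ / ‖v₁‖ - 1 = (‖v₂‖ - ‖v₁‖) / ‖v₁‖ by field_simp]
      rw [abs_div, abs_of_pos hn1]
      field_simp
    have h3 : |‖v₂‖ - ‖v₁‖| ≤ ‖v₁ - v₂‖ := by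
      rw [norm_sub_rev]; exact abs_norm_sub_norm_le v₂ v₁
    calc ‖u₁ - u₂‖ * ‖v₂‖ = ‖‖v₂‖ • (u₁ - u₂)‖ := by
          rw [norm_smul, Real.norm_eq_abs, abs_of_pos hn2]; ring
      _ = ‖(v₁ - v₂) + ((‖v₂‖ / ‖v₁‖ - 1) • v₁)‖ := by rw [h1]
      _ ≤ ‖v₁ - v₂‖ + ‖(‖v₂‖ / ‖v₁‖ - 1) • v₁‖ := norm_add_le _ _
      _ ≤ ‖v₁ - v₂‖ + ‖v₁ - v₂‖ := by rw [h2]; linarith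
      _ = 2 * ‖v₁ - v₂‖ := by ring
  -- main decomposition
  have hdecomp : (matVec C v₁ - r₁ • v₁) - (matVec C v₂ - r₂ • v₂) =
      (matVec C (v₁ - v₂) - r₁ • (v₁ - v₂)) - (r₁ - r₂) • v₂ := by
    rw [matVec_sub]
    module
  rw [hdecomp]
  have hD : (0:ℝ) ≤ ‖v₁ - v₂‖ := norm_nonneg _
  calc ‖(matVec C (v₁ - v₂) - r₁ • (v₁ - v₂)) - (r₁ - r₂) • v₂‖
      ≤ ‖matVec C (v₁ - v₂) - r₁ • (v₁ - v₂)‖ + ‖(r₁ - r₂) • v₂‖ := norm_sub_le _ _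
    _ ≤ (‖matVec C (v₁ - v₂)‖ + ‖r₁ • (v₁ - v₂)‖) + ‖(r₁ - r₂) • v₂‖ := by
        exact add_le_add_left (norm_sub_le _ _) _
    _ ≤ (lam1 * ‖v₁ - v₂‖ + lam1 * ‖v₁ - v₂‖) + (2 * lam1 * ‖u₁ - u₂‖) * ‖v₂‖ := by
        refine add_le_add (add_le_add (hCnorm _) ?_) ?_
        · rw [norm_smul, Real.norm_eq_abs]
          exact mul_le_mul_of_nonneg_right habsr₁ hD
        · rw [norm_smul, Real.norm_eq_abs]
          exact mul_le_mul_of_nonneg_right habsdiff (norm_nonneg _)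
    _ ≤ (lam1 * ‖v₁ - v₂‖ + lam1 * ‖v₁ - v₂‖) + 2 * lam1 * (2 * ‖v₁ - v₂‖) := by
        have : (2 * lam1 * ‖u₁ - u₂‖) * ‖v₂‖ = 2 * lam1 * (‖u₁ - u₂‖ * ‖v₂‖) := by ring
        rw [this]
        exact add_le_add_right (mul_le_mul_of_nonneg_left hkey2 (by positivity)) _
    _ = 6 * lam1 * ‖v₁ - v₂‖ := by ring
end

section
/- If 0 < α < ((λ_k − λ_{k+1})/((k+5)(k+6))) · ((1−β)/(9λ₁))², then the spectral radius of the 3×3 matrix P_k(α) = [[(1+β)/2 + αL_k, L_k(2+αL_k), αL_k²], [α, (1+β)/2, 0], [0, αL_k, δ_k]] is strictly less than 1, where L_k = (k+5)λ₁ and δ_k = (1+αλ_{k+1})/(1+αλ_k). -/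
set_option autoImplicit false
set_option maxHeartbeats 2000000

lemma gersh3 (A : Matrix (Fin 3) (Fin 3) ℝ) (t s : ℝ) (ht : 0 < t) (hs : 0 < s)
    (h0 : |A 0 0| + |A 0 1| * t + |A 0 2| * s < 1)
    (h1 : |A 1 0| / t + |A 1 1| + |A 1 2| * s / t < 1)
    (h2 : |A 2 0| / s + |A 2 1| * t / s + |A 2 2| < 1)
    (μ : ℂ) (hμ : μ ∈ spectrum ℂ (A.map Complex.ofReal)) : ‖μ‖ < 1 := by
  set w : Fin 3 → ℂ := ![1, (t : ℂ), (s : ℂ)] with hw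
  set wi : Fin 3 → ℂ := ![1, (t : ℂ)⁻¹, (s : ℂ)⁻¹] with hwi
  have htne : (t : ℂ) ≠ 0 := Complex.ofReal_ne_zero.mpr ht.ne'
  have hsne : (s : ℂ) ≠ 0 := Complex.ofReal_ne_zero.mpr hs.ne'
  have hprod : (fun i => w i * wi i) = fun _ => (1 : ℂ) := by
    funext i; fin_cases i <;> simp [hw, hwi, mul_inv_cancel₀, htne, hsne]
  have hprod' : (fun i => wi i * w i) = fun _ => (1 : ℂ) := by
    funext i
    rw [mul_comm]
    exact congrFun hprod i
  have hd1 : Matrix.diagonal w * Matrix.diagonal wi = 1 := by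
    rw [Matrix.diagonal_mul_diagonal, hprod, Matrix.diagonal_one]
  have hd2 : Matrix.diagonal wi * Matrix.diagonal w = 1 := by
    rw [Matrix.diagonal_mul_diagonal, hprod', Matrix.diagonal_one]
  set u : (Matrix (Fin 3) (Fin 3) ℂ)ˣ := ⟨Matrix.diagonal w, Matrix.diagonal wi, hd1, hd2⟩ with hu
  set B : Matrix (Fin 3) (Fin 3) ℂ :=
    Matrix.diagonal wi * (A.map Complex.ofReal) * Matrix.diagonal w with hB
  have hspec : μ ∈ spectrum ℂ B := by
    have hBu : B = ((u⁻¹ : (Matrix (Fin 3) (Fin 3) ℂ)ˣ) : Matrix (Fin 3) (Fin 3) ℂ)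
        * (A.map Complex.ofReal) * ((u : (Matrix (Fin 3) (Fin 3) ℂ)ˣ) : Matrix (Fin 3) (Fin 3) ℂ) := rfl
    rw [hBu, spectrum.units_conjugate']
    exact hμ
  have heig : Module.End.HasEigenvalue (Matrix.toLin' B) μ := by
    rw [Module.End.hasEigenvalue_iff_mem_spectrum, ← Matrix.toLin_eq_toLin']
    rw [show Matrix.toLin (Pi.basisFun ℂ (Fin 3)) (Pi.basisFun ℂ (Fin 3)) B
        = Matrix.toLinAlgEquiv (Pi.basisFun ℂ (Fin 3)) B from rfl]
    rwa [AlgEquiv.spectrum_eq (Matrix.toLinAlgEquiv (Pi.basisFun ℂ (Fin 3))) B]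
  obtain ⟨i, hi⟩ := eigenvalue_mem_ball heig
  rw [Metric.mem_closedBall, dist_eq_norm] at hi
  have key : ‖μ‖ ≤ ∑ j, ‖B i j‖ := by
    calc ‖μ‖ = ‖(μ - B i i) + B i i‖ := by rw [sub_add_cancel]
    _ ≤ ‖μ - B i i‖ + ‖B i i‖ := norm_add_le _ _
    _ ≤ (∑ j ∈ Finset.univ.erase i, ‖B i j‖) + ‖B i i‖ := add_le_add hi le_rfl
    _ = ∑ j, ‖B i j‖ := Finset.sum_erase_add _ _ (Finset.mem_univ i)
  have hBij : ∀ i j, ‖B i j‖ = ‖wi i‖ * (|A i j| * ‖w j‖) := by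
    intro i j
    rw [hB]
    simp [Matrix.mul_diagonal, Matrix.diagonal_mul, Matrix.map_apply, norm_mul, mul_assoc,
      Real.norm_eq_abs]
  refine lt_of_le_of_lt key ?_
  have htinv : t⁻¹ > 0 := inv_pos.mpr ht
  have hsinv : s⁻¹ > 0 := inv_pos.mpr hs
  have h3 : i = 0 ∨ i = 1 ∨ i = 2 := by fin_cases i <;> simp
  rcases h3 with rfl | rfl | rfl
  · rw [Fin.sum_univ_three]
    simp only [hBij, hw, hwi, Matrix.cons_val_zero, Matrix.cons_val_one, Matrix.head_cons,
      Matrix.cons_val_two, Matrix.tail_cons, norm_one, norm_inv, Complex.norm_real,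
      Real.norm_eq_abs, abs_of_pos ht, abs_of_pos hs, one_mul, mul_one]
    linarith
  · rw [Fin.sum_univ_three]
    simp only [hBij, hw, hwi, Matrix.cons_val_zero, Matrix.cons_val_one, Matrix.head_cons,
      Matrix.cons_val_two, Matrix.tail_cons, norm_one, norm_inv, Complex.norm_real,
      Real.norm_eq_abs, abs_of_pos ht, abs_of_pos hs, one_mul, mul_one]
    rw [div_eq_mul_inv, div_eq_mul_inv] at h1
    have e : t⁻¹ * (|A 1 1| * t) = |A 1 1| := by field_simp
    rw [e]; linarith
  · rw [Fin.sum_univ_three]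
    simp only [hBij, hw, hwi, Matrix.cons_val_zero, Matrix.cons_val_one, Matrix.head_cons,
      Matrix.cons_val_two, Matrix.tail_cons, norm_one, norm_inv, Complex.norm_real,
      Real.norm_eq_abs, abs_of_pos ht, abs_of_pos hs, one_mul, mul_one]
    rw [div_eq_mul_inv, div_eq_mul_inv] at h2
    have e : s⁻¹ * (|A 2 2| * s) = |A 2 2| := by field_simp
    rw [e]; linarith


/-- if `0 < α < ((λ_k − λ_{k+1})/((k+5)(k+6))) ((1−β)/(9λ₁))²`, then the
spectral radius of the 3×3 matrix `P_k(α)` is strictly less than 1, i.e. every complex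
eigenvalue of `P_k(α)` has modulus less than 1.  Here `L_k = (k+5)λ₁` and
`δ_k = (1+αλ_{k+1})/(1+αλ_k)`. -/
theorem spectral_radius_P_lt_one
    (β : ℝ) (hβ0 : 0 ≤ β) (hβ1 : β < 1)
    (k : ℕ) (hk : 1 ≤ k)
    (lam1 lamk lamk1 : ℝ) (hord1 : lamk ≤ lam1) (hgap : lamk1 < lamk)
    (hnn : 0 ≤ lamk1) (hlam1 : 0 < lam1)
    (α : ℝ) (hα0 : 0 < α)
    (L : ℝ) (hL : L = ((k : ℝ) + 5) * lam1)
    (δ : ℝ) (hδ : δ = (1 + α * lamk1) / (1 + α * lamk))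
    (hα : α < (lamk - lamk1) / (((k : ℝ) + 5) * ((k : ℝ) + 6)) * ((1 - β) / (9 * lam1)) ^ 2) :
    ∀ μ ∈ spectrum ℂ
      ((!![(1 + β) / 2 + α * L, L * (2 + α * L), α * L ^ 2;
           α, (1 + β) / 2, 0;
           0, α * L, δ]).map (Complex.ofReal)),
      ‖μ‖ < 1 := by
  intro μ hμ
  obtain ⟨ε, hε⟩ : ∃ ε : ℝ, ε = (1 - β) / 2 := ⟨_, rfl⟩
  obtain ⟨g, hg⟩ : ∃ g : ℝ, g = lamk - lamk1 := ⟨_, rfl⟩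
  have hεpos : 0 < ε := by rw [hε]; linarith
  have hεle : ε ≤ 1 / 2 := by rw [hε]; linarith
  have hgpos : 0 < g := by rw [hg]; linarith
  have hgle : g ≤ lam1 := by rw [hg]; linarith
  have hk1 : (1 : ℝ) ≤ (k : ℝ) := by exact_mod_cast hk
  have hK5 : (6 : ℝ) ≤ (k : ℝ) + 5 := by linarith
  have hK6 : (7 : ℝ) ≤ (k : ℝ) + 6 := by linarith
  have hLpos : 0 < L := by rw [hL]; positivity
  have hlamk : 0 < lamk := lt_of_le_of_lt hnn hgap
  have hden : 0 < 1 + α * lamk := by positivity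
  obtain ⟨t, ht'⟩ : ∃ t : ℝ, t = ε / (9 * L) := ⟨_, rfl⟩
  obtain ⟨s, hs'⟩ : ∃ s : ℝ, s = 2 * ε * (1 + α * lamk) / (9 * g) := ⟨_, rfl⟩
  have htpos : 0 < t := by rw [ht']; positivity
  have hspos : 0 < s := by rw [hs']; positivity
  -- main polynomial bound
  have hα' : α < g / (((k : ℝ) + 5) * ((k : ℝ) + 6)) * (2 * ε / (9 * lam1)) ^ 2 := by
    rw [show (2 * ε / (9 * lam1)) = ((1 - β) / (9 * lam1)) by rw [hε]; ring]
    rw [hg]; exact hα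
  have hALp : α * L * (81 * lam1 * ((k : ℝ) + 6)) < 4 * g * ε ^ 2 := by
    have h1' := mul_lt_mul_of_pos_right hα' hLpos
    have h2' := mul_lt_mul_of_pos_right h1' (show (0:ℝ) < 81 * lam1 * ((k : ℝ) + 6) by positivity)
    have heq : g / (((k : ℝ) + 5) * ((k : ℝ) + 6)) * (2 * ε / (9 * lam1)) ^ 2 * L
        * (81 * lam1 * ((k : ℝ) + 6)) = 4 * g * ε ^ 2 := by
      rw [hL]; field_simp; ring
    calc α * L * (81 * lam1 * ((k : ℝ) + 6)) < _ := h2'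
      _ = 4 * g * ε ^ 2 := heq
  have hALpos : 0 < α * L := mul_pos hα0 hLpos
  have hrow1 : 567 * (α * L) < 4 * ε ^ 2 := by
    nlinarith [hALp, hlam1, hK6, hALpos,
      mul_nonneg (sub_nonneg.mpr hgle) (sq_nonneg ε),
      mul_nonneg (by linarith : (0:ℝ) ≤ (k : ℝ) + 6 - 7) (mul_nonneg hALpos.le hlam1.le)]
  have hb1 : α * L < ε / 3 := by
    nlinarith [hrow1, hεpos, hεle, mul_nonneg hεpos.le (sub_nonneg.mpr hεle)]
  have hAL1 : α * L ≤ 1 := by linarith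
  have hLge : lam1 ≤ L := by rw [hL]; nlinarith [hlam1]
  have hALk : α * lamk ≤ 1 := by
    have h1' : α * lamk ≤ α * L := mul_le_mul_of_nonneg_left (hord1.trans hLge) hα0.le
    linarith
  have hLK : L ≤ ((k : ℝ) + 6) * lam1 := by rw [hL]; nlinarith [hlam1]
  have hALsq : 81 * (α * L ^ 2) < 4 * g * ε ^ 2 := by
    nlinarith [mul_lt_mul_of_pos_right hALp hLpos,
      mul_nonneg (mul_nonneg (mul_nonneg hgpos.le (sq_nonneg ε)) (by norm_num : (0:ℝ) ≤ 4))
        (sub_nonneg.mpr hLK),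
      mul_pos hlam1 (show (0:ℝ) < (k : ℝ) + 6 by linarith), hgpos, hεpos, hALpos]
  -- row bounds
  have hb2 : L * (2 + α * L) * t ≤ ε / 3 := by
    have e2 : L * (2 + α * L) * t = ε * (2 + α * L) / 9 := by
      rw [ht']; field_simp
    rw [e2]
    nlinarith [mul_nonneg hεpos.le (sub_nonneg.mpr hAL1), hεpos]
  have hb3 : α * L ^ 2 * s ≤ ε / 9 := by
    have e3 : α * L ^ 2 * s = 2 * ε * (1 + α * lamk) * (α * L ^ 2) / (9 * g) := by
      rw [hs']; ring
    rw [e3, div_le_div_iff₀ (by positivity) (by norm_num : (0:ℝ) < 9)]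
    have hX : 0 ≤ α * L ^ 2 := by positivity
    have A1 : ε * (α * L ^ 2) * (α * lamk) ≤ ε * (α * L ^ 2) := by
      nlinarith [mul_nonneg (mul_nonneg hεpos.le hX) (sub_nonneg.mpr hALk)]
    have A2 : 81 * (ε * (α * L ^ 2)) ≤ 4 * (g * ε ^ 3) := by
      nlinarith [mul_le_mul_of_nonneg_left hALsq.le hεpos.le]
    have A3 : g * ε ^ 3 ≤ g * ε / 4 := by
      nlinarith [mul_nonneg (mul_nonneg hgpos.le hεpos.le)
        (by nlinarith [hεpos, hεle] : (0:ℝ) ≤ 1/4 - ε ^ 2)]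
    linarith [A1, A2, A3, mul_pos hgpos hεpos]
  have hδnn : 0 ≤ δ := by rw [hδ]; positivity
  -- apply the Gershgorin-type lemma
  refine gersh3 _ t s htpos hspos ?_ ?_ ?_ μ hμ
  · simp only [Matrix.cons_val', Matrix.cons_val_zero, Matrix.cons_val_one, Matrix.head_cons,
      Matrix.empty_val', Matrix.cons_val_fin_one, Matrix.head_fin_const, Matrix.cons_val_two,
      Matrix.tail_cons, Matrix.of_apply]
    rw [abs_of_nonneg (by positivity), abs_of_nonneg (by positivity),
      abs_of_nonneg (by positivity)]
    have hβε : (1 + β) / 2 = 1 - ε := by rw [hε]; ring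
    linarith [hb1, hb2, hb3]
  · simp only [Matrix.cons_val', Matrix.cons_val_zero, Matrix.cons_val_one, Matrix.head_cons,
      Matrix.empty_val', Matrix.cons_val_fin_one, Matrix.head_fin_const, Matrix.cons_val_two,
      Matrix.tail_cons, Matrix.of_apply]
    rw [abs_of_nonneg hα0.le, abs_of_nonneg (by positivity : (0:ℝ) ≤ (1 + β)/2), abs_zero]
    have e1 : α / t = 9 * (α * L) / ε := by rw [ht']; field_simp
    have hb4 : 9 * (α * L) / ε < ε := by
      rw [div_lt_iff₀ hεpos]; nlinarith [hrow1, hεpos, hεle]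
    have hβε : (1 + β) / 2 = 1 - ε := by rw [hε]; ring
    rw [e1]
    simp only [zero_mul, zero_div]
    linarith
  · simp only [Matrix.cons_val', Matrix.cons_val_zero, Matrix.cons_val_one, Matrix.head_cons,
      Matrix.empty_val', Matrix.cons_val_fin_one, Matrix.head_fin_const, Matrix.cons_val_two,
      Matrix.tail_cons, Matrix.of_apply]
    rw [abs_zero, abs_of_nonneg (by positivity : (0:ℝ) ≤ α * L), abs_of_nonneg hδnn]
    have ets : α * L * t / s = α * g / (2 * (1 + α * lamk)) := by
      rw [ht', hs']; field_simp
    rw [zero_div, zero_add, ets, hδ,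
      div_add_div _ _ (by positivity : (2 * (1 + α * lamk)) ≠ 0) (ne_of_gt hden),
      div_lt_one (by positivity)]
    nlinarith [mul_pos hden (mul_pos hα0 hgpos), hden]
end

section
/- Fix t ≥ 1 and suppose that the averages of the tracking variables satisfy (1/M)Σ_{i=1}^M s_i^(t−1) = g^(t−1). Then the consensus error satisfies the recursion (Σ_{i=1}^M ‖x_i^(t) − x̄^(t)‖²)^{1/2} ≤ ((1+β)/2) (Σ_{i=1}^M ‖x_i^(t−1) − x̄^(t−1)‖²)^{1/2} + α (Σ_{i=1}^M ‖s_i^(t−1) − g^(t−1)‖²)^{1/2}. -/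
set_option autoImplicit false

open scoped RealInnerProductSpace

/-- The local Krasulina pseudo-gradient `h_i(v) = C_i v − (vᵀC_i v/‖v‖²) v`. -/
noncomputable def pgrad {d : ℕ} (A : Matrix (Fin d) (Fin d) ℝ)
    (v : EuclideanSpace ℝ (Fin d)) : EuclideanSpace ℝ (Fin d) :=
  matVec A v - (⟪v, matVec A v⟫ / ‖v‖ ^ 2) • v

set_option maxHeartbeats 1000000

lemma matVec_selfadj {n : ℕ} {A : Matrix (Fin n) (Fin n) ℝ} (hA : A.IsSymm)
    (a c : EuclideanSpace ℝ (Fin n)) : ⟪matVec A a, c⟫ = ⟪a, matVec A c⟫ := by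
  simp only [matVec, PiLp.inner_apply, RCLike.inner_apply, starRingEnd_apply, star_trivial,
    Matrix.mulVec, dotProduct, Finset.sum_mul, Finset.mul_sum]
  rw [Finset.sum_comm]
  apply Finset.sum_congr rfl; intro i _
  apply Finset.sum_congr rfl; intro j _
  rw [hA.apply i j]; ring

lemma spec_bound {M : ℕ} (hM : 2 ≤ M)
    (W : Matrix (Fin M) (Fin M) ℝ) (hWs : W.IsSymm)
    (hWrow : ∀ i, ∑ j, W i j = 1)
    (μ : Fin M → ℝ) (u : Fin M → EuclideanSpace ℝ (Fin M)) (hu : Orthonormal ℝ u)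
    (hWeig : ∀ i, matVec W (u i) = μ i • u i)
    (hμmono : ∀ i j : Fin M, i ≤ j → μ j ≤ μ i) (hμ0 : μ ⟨0, by omega⟩ = 1)
    (β : ℝ) (hβ : β = max |μ ⟨1, by omega⟩| |μ ⟨M - 1, by omega⟩|)
    (v : EuclideanSpace ℝ (Fin M)) (hv : ∑ i, v i = 0) :
    ‖matVec W v + v‖ ≤ (1 + β) * ‖v‖ := by
  have hβ0 : 0 ≤ β := hβ ▸ le_trans (abs_nonneg _) (le_max_left _ _)
  have hβ1 : |μ ⟨1, by omega⟩| ≤ β := hβ ▸ le_max_left _ _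
  have hβ2 : |μ ⟨M - 1, by omega⟩| ≤ β := hβ ▸ le_max_right _ _
  -- orthonormal basis
  have card_eq : Fintype.card (Fin M) = Module.finrank ℝ (EuclideanSpace ℝ (Fin M)) := by
    simp [finrank_euclideanSpace_fin]
  haveI : Nonempty (Fin M) := ⟨⟨0, by omega⟩⟩
  let bB := basisOfOrthonormalOfCardEqFinrank hu card_eq
  have hbB : ⇑bB = u := coe_basisOfOrthonormalOfCardEqFinrank hu card_eq
  let b : OrthonormalBasis (Fin M) ℝ (EuclideanSpace ℝ (Fin M)) :=
    bB.toOrthonormalBasis (hbB ▸ hu)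
  have hb : ⇑b = u := by
    rw [Module.Basis.coe_toOrthonormalBasis, hbB]
  -- eigen inner products
  have hmuk : ∀ k w, ⟪u k, matVec W w⟫ = μ k * ⟪u k, w⟫ := by
    intro k w
    rw [← matVec_selfadj hWs, hWeig k, inner_smul_left]
    simp
  -- bound on each eigenvalue except possibly 0
  have hμle : ∀ k : Fin M, (1:ℕ) ≤ (k:ℕ) → |1 + μ k| ≤ 1 + β := by
    intro k hk
    have h1 : μ k ≤ μ ⟨1, by omega⟩ := hμmono ⟨1, by omega⟩ k (by exact hk)
    have h2 : μ ⟨M - 1, by omega⟩ ≤ μ k := hμmono k ⟨M - 1, by omega⟩ (by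
      simp [Fin.le_def]; omega)
    have := abs_le.mp hβ1
    have := abs_le.mp hβ2
    rw [abs_le]; constructor <;> linarith
  -- Parseval-type identities
  have parseval : ∀ w : EuclideanSpace ℝ (Fin M), ‖w‖ ^ 2 = ∑ k, ⟪u k, w⟫ ^ 2 := by
    intro w
    rw [← real_inner_self_eq_norm_sq, ← b.sum_inner_mul_inner w w]
    apply Finset.sum_congr rfl; intro k _
    rw [hb, real_inner_comm w (u k), sq]
  have key : ‖matVec W v + v‖ ^ 2 ≤ ((1 + β) * ‖v‖) ^ 2 := by
    rw [parseval, mul_pow, parseval v, Finset.mul_sum]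
    apply Finset.sum_le_sum
    intro k _
    have hexp : ⟪u k, matVec W v + v⟫ = (1 + μ k) * ⟪u k, v⟫ := by
      rw [inner_add_right, hmuk]; ring
    rw [hexp]
    by_cases hk : (1:ℕ) ≤ (k:ℕ)
    · have := hμle k hk
      have h2 : |(1 + μ k) * ⟪u k, v⟫| ≤ (1 + β) * |⟪u k, v⟫| := by
        rw [abs_mul]
        exact mul_le_mul_of_nonneg_right this (abs_nonneg _)
      calc ((1 + μ k) * ⟪u k, v⟫) ^ 2 = |(1 + μ k) * ⟪u k, v⟫| ^ 2 := (sq_abs _).symm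
        _ ≤ ((1 + β) * |⟪u k, v⟫|) ^ 2 := by
            apply pow_le_pow_left₀ (abs_nonneg _) h2
        _ = (1 + β) ^ 2 * ⟪u k, v⟫ ^ 2 := by rw [mul_pow, sq_abs]
    · -- k = 0
      have hk0 : k = ⟨0, by omega⟩ := by
        apply Fin.ext; simpa using hk
      rw [hk0]
      by_cases h1b : (1:ℝ) ≤ β
      · have h2 : |(1 + μ ⟨0, by omega⟩)| ≤ 1 + β := by
          rw [hμ0]; rw [abs_le]; constructor <;> linarith
        have h3 : |(1 + μ ⟨0, by omega⟩) * ⟪u ⟨0, by omega⟩, v⟫| ≤ (1 + β) * |⟪u ⟨0, by omega⟩, v⟫| := by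
          rw [abs_mul]
          exact mul_le_mul_of_nonneg_right h2 (abs_nonneg _)
        calc ((1 + μ ⟨0, by omega⟩) * ⟪u ⟨0, by omega⟩, v⟫) ^ 2
            = |(1 + μ ⟨0, by omega⟩) * ⟪u ⟨0, by omega⟩, v⟫| ^ 2 := (sq_abs _).symm
          _ ≤ ((1 + β) * |⟪u ⟨0, by omega⟩, v⟫|) ^ 2 := pow_le_pow_left₀ (abs_nonneg _) h3 _
          _ = (1 + β) ^ 2 * ⟪u ⟨0, by omega⟩, v⟫ ^ 2 := by rw [mul_pow, sq_abs]
      · -- β < 1 : show coefficient 0 vanishes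
        push_neg at h1b
        set ones : EuclideanSpace ℝ (Fin M) := WithLp.toLp 2 (fun _ => (1:ℝ)) with hones
        have hWones : matVec W ones = ones := by
          ext i
          simp [matVec, Matrix.mulVec, dotProduct, hones, hWrow i]
        have hiv : ⟪ones, v⟫ = 0 := by
          simp only [PiLp.inner_apply, RCLike.inner_apply, starRingEnd_apply, star_trivial, hones,
            one_mul, mul_one]
          exact hv
        have huko : ∀ k : Fin M, k ≠ ⟨0, by omega⟩ → ⟪u k, ones⟫ = 0 := by
          intro k hk
          have hk1 : (1:ℕ) ≤ (k:ℕ) := by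
            rcases Nat.eq_zero_or_pos (k:ℕ) with h | h
            · exact absurd (Fin.ext h) hk
            · exact h
          have hμk : μ k < 1 := by
            have h1 : μ k ≤ μ ⟨1, by omega⟩ := hμmono ⟨1, by omega⟩ k hk1
            have := abs_le.mp hβ1
            linarith
          have : ⟪u k, ones⟫ = μ k * ⟪u k, ones⟫ := by
            conv_lhs => rw [← hWones, hmuk]
          have h2 : (1 - μ k) * ⟪u k, ones⟫ = 0 := by linarith
          rcases mul_eq_zero.mp h2 with h | h
          · linarith
          · exact h
        have hones_norm : ‖ones‖ ^ 2 = (M:ℝ) := by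
          rw [EuclideanSpace.norm_eq]
          rw [Real.sq_sqrt (by positivity)]
          simp [hones]
        have hparse_ones : ‖ones‖ ^ 2 = ⟪u ⟨0, by omega⟩, ones⟫ ^ 2 := by
          rw [parseval ones]
          rw [Finset.sum_eq_single (⟨0, by omega⟩ : Fin M)]
          · intro k _ hk; rw [huko k hk]; ring
          · intro h; exact absurd (Finset.mem_univ _) h
        have hne : ⟪u ⟨0, by omega⟩, ones⟫ ≠ 0 := by
          intro h
          rw [h] at hparse_ones
          rw [hones_norm] at hparse_ones
          have : (0:ℝ) < M := by positivity
          simp at hparse_ones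
          omega
        have hinner0 : ⟪u ⟨0, by omega⟩, v⟫ = 0 := by
          have hexpand : ⟪ones, v⟫ = ∑ k, ⟪ones, u k⟫ * ⟪u k, v⟫ := by
            rw [← b.sum_inner_mul_inner ones v]
            apply Finset.sum_congr rfl; intro k _; rw [hb]
          rw [hiv] at hexpand
          rw [Finset.sum_eq_single (⟨0, by omega⟩ : Fin M)] at hexpand
          · have := hexpand.symm
            rcases mul_eq_zero.mp this with h | h
            · exact absurd (by rw [real_inner_comm]; exact h) hne
            · exact h
          · intro k _ hk
            rw [real_inner_comm, huko k hk]; ring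
          · intro h; exact absurd (Finset.mem_univ _) h
        simp [hinner0]
  have h1 : 0 ≤ (1 + β) * ‖v‖ := by positivity
  nlinarith [norm_nonneg (matVec W v + v)]

lemma euclid_norm_sq {n : ℕ} (w : EuclideanSpace ℝ (Fin n)) : ‖w‖ ^ 2 = ∑ i, (w i) ^ 2 := by
  rw [EuclideanSpace.norm_eq, Real.sq_sqrt (by positivity)]
  simp [sq_abs]

lemma l2_norm_triangle {ι : Type*} [Fintype ι] {E : Type*} [SeminormedAddCommGroup E]
    (a c : ι → E) :
    Real.sqrt (∑ i, ‖a i + c i‖ ^ 2) ≤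
      Real.sqrt (∑ i, ‖a i‖ ^ 2) + Real.sqrt (∑ i, ‖c i‖ ^ 2) := by
  set P : EuclideanSpace ℝ ι := WithLp.toLp 2 (fun i => ‖a i‖) with hP
  set Q : EuclideanSpace ℝ ι := WithLp.toLp 2 (fun i => ‖c i‖) with hQ
  have hPn : ‖P‖ = Real.sqrt (∑ i, ‖a i‖ ^ 2) := by
    rw [EuclideanSpace.norm_eq]; congr 1
    exact Finset.sum_congr rfl fun i _ => by simp [hP]
  have hQn : ‖Q‖ = Real.sqrt (∑ i, ‖c i‖ ^ 2) := by
    rw [EuclideanSpace.norm_eq]; congr 1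
    exact Finset.sum_congr rfl fun i _ => by simp [hQ]
  have h1 : Real.sqrt (∑ i, ‖a i + c i‖ ^ 2) ≤ ‖P + Q‖ := by
    rw [EuclideanSpace.norm_eq]
    apply Real.sqrt_le_sqrt
    apply Finset.sum_le_sum
    intro i _
    have h2 : ‖(P + Q) i‖ = ‖a i‖ + ‖c i‖ := by
      have : (P + Q) i = ‖a i‖ + ‖c i‖ := rfl
      rw [this, Real.norm_eq_abs, abs_of_nonneg (by positivity)]
    rw [h2]
    have := norm_add_le (a i) (c i)
    nlinarith [norm_nonneg (a i + c i), norm_nonneg (a i), norm_nonneg (c i)]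
  calc Real.sqrt (∑ i, ‖a i + c i‖ ^ 2) ≤ ‖P + Q‖ := h1
    _ ≤ ‖P‖ + ‖Q‖ := norm_add_le _ _
    _ = _ := by rw [hPn, hQn]

/-- consensus error recursion for FAST-PCA (first eigenvector).
Here `t = T + 1 ≥ 1`, `x̄^(t) = (1/M)Σᵢ x_i^(t)`, `g^(t) = (1/M)Σᵢ h_i(x_i^(t))`, and
`β = max{|λ₂(W)|, |λ_M(W)|}` (eigenvalues of `W` in decreasing order, 0-based indexing). -/
theorem fastpca_consensus_error_recursion
    {d M : ℕ} (hd : 0 < d) (hM : 2 ≤ M)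
    (Ci : Fin M → Matrix (Fin d) (Fin d) ℝ) (hCi : ∀ i, (Ci i).PosSemidef)
    (lam : Fin d → ℝ) (q : Fin d → EuclideanSpace ℝ (Fin d))
    (hq : Orthonormal ℝ q)
    (heig : ∀ l, matVec (∑ i, Ci i) (q l) = lam l • q l)
    (hmono : ∀ i j : Fin d, i ≤ j → lam j ≤ lam i) (hnn : ∀ l, 0 ≤ lam l)
    (W : Matrix (Fin M) (Fin M) ℝ) (hWs : W.IsSymm)
    (hWnn : ∀ i j, 0 ≤ W i j)
    (hWrow : ∀ i, ∑ j, W i j = 1) (hWcol : ∀ j, ∑ i, W i j = 1)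
    (μ : Fin M → ℝ) (u : Fin M → EuclideanSpace ℝ (Fin M)) (hu : Orthonormal ℝ u)
    (hWeig : ∀ i, matVec W (u i) = μ i • u i)
    (hμmono : ∀ i j : Fin M, i ≤ j → μ j ≤ μ i) (hμ0 : μ ⟨0, by omega⟩ = 1)
    (β : ℝ) (hβ : β = max |μ ⟨1, by omega⟩| |μ ⟨M - 1, by omega⟩|)
    (α : ℝ) (hα0 : 0 < α)
    (x s : ℕ → Fin M → EuclideanSpace ℝ (Fin d))
    (hxnz : ∀ t i, x t i ≠ 0)
    (hxupd : ∀ t i, x (t + 1) i =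
      (1 / 2 : ℝ) • x t i + ∑ j, (W i j / 2) • x t j + α • s t i)
    (hsupd : ∀ t i, s (t + 1) i =
      (1 / 2 : ℝ) • s t i + ∑ j, (W i j / 2) • s t j
        + pgrad (Ci i) (x (t + 1) i) - pgrad (Ci i) (x t i))
    (T : ℕ)
    (havg : (M : ℝ)⁻¹ • ∑ i, s T i = (M : ℝ)⁻¹ • ∑ i, pgrad (Ci i) (x T i)) :
    Real.sqrt (∑ i, ‖x (T + 1) i - (M : ℝ)⁻¹ • ∑ j, x (T + 1) j‖ ^ 2) ≤
      (1 + β) / 2 * Real.sqrt (∑ i, ‖x T i - (M : ℝ)⁻¹ • ∑ j, x T j‖ ^ 2) +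
        α * Real.sqrt (∑ i, ‖s T i - (M : ℝ)⁻¹ • ∑ j, pgrad (Ci j) (x T j)‖ ^ 2) := by
  have hMne : (M : ℝ) ≠ 0 := by positivity
  have hβ0 : 0 ≤ β := hβ ▸ le_trans (abs_nonneg _) (le_max_left _ _)
  set xb : EuclideanSpace ℝ (Fin d) := (M : ℝ)⁻¹ • ∑ j, x T j with hxb
  set g : EuclideanSpace ℝ (Fin d) := (M : ℝ)⁻¹ • ∑ j, pgrad (Ci j) (x T j) with hg
  set y : Fin M → EuclideanSpace ℝ (Fin d) := fun i => x T i - xb with hy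
  set e : Fin M → EuclideanSpace ℝ (Fin d) := fun i => s T i - g with he
  -- sum of y is zero
  have hsumy : ∑ i, y i = 0 := by
    have : ∑ i : Fin M, y i = (∑ i, x T i) - (M : ℝ) • xb := by
      rw [Finset.sum_sub_distrib, Finset.sum_const, Finset.card_univ, Fintype.card_fin]
      rw [← Nat.cast_smul_eq_nsmul ℝ]
    rw [this, hxb, smul_smul, mul_inv_cancel₀ hMne, one_smul, sub_self]
  -- sum of x at T+1
  have hsum1 : ∑ i, x (T + 1) i = (∑ i, x T i) + α • ∑ i, s T i := by
    have h1 : ∀ i : Fin M, x (T + 1) i =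
        (1 / 2 : ℝ) • x T i + ∑ j, (W i j / 2) • x T j + α • s T i := hxupd T
    rw [Finset.sum_congr rfl fun i _ => h1 i]
    rw [Finset.sum_add_distrib, Finset.sum_add_distrib]
    rw [Finset.sum_comm]
    have h2 : ∀ j : Fin M, ∑ i : Fin M, (W i j / 2) • x T j = (1 / 2 : ℝ) • x T j := by
      intro j
      rw [← Finset.sum_smul]
      congr 1
      rw [← Finset.sum_div, hWcol j]
    rw [Finset.sum_congr rfl fun j _ => h2 j]
    rw [← Finset.smul_sum, ← Finset.smul_sum]
    module
  have hxbar1 : (M : ℝ)⁻¹ • ∑ j, x (T + 1) j = xb + α • g := by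
    rw [hsum1, smul_add, ← hxb, smul_comm ((M:ℝ)⁻¹) α, havg]
  -- pointwise identity
  set A : Fin M → EuclideanSpace ℝ (Fin d) :=
    fun i => (1 / 2 : ℝ) • (y i + ∑ j, W i j • y j) with hA
  have hkey : ∀ i, x (T + 1) i - (M : ℝ)⁻¹ • ∑ j, x (T + 1) j = A i + α • e i := by
    intro i
    rw [hxbar1, hxupd T i]
    simp only [hA, hy, he]
    have h1 : ∑ j, (W i j / 2) • x T j = (1 / 2 : ℝ) • ∑ j, W i j • x T j := by
      rw [Finset.smul_sum]
      apply Finset.sum_congr rfl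
      intro j _
      rw [smul_smul]
      congr 1
      ring
    have h2 : ∑ j, W i j • (x T j - xb) = (∑ j, W i j • x T j) - xb := by
      have h3 : ∀ j : Fin M, W i j • (x T j - xb) = W i j • x T j - W i j • xb :=
        fun j => smul_sub _ _ _
      rw [Finset.sum_congr rfl fun j _ => h3 j, Finset.sum_sub_distrib, ← Finset.sum_smul,
        hWrow i, one_smul]
    rw [h1, h2]
    module
  -- rewrite LHS
  have hL : (∑ i, ‖x (T + 1) i - (M : ℝ)⁻¹ • ∑ j, x (T + 1) j‖ ^ 2) =
      ∑ i, ‖A i + α • e i‖ ^ 2 :=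
    Finset.sum_congr rfl fun i _ => by rw [hkey i]
  rw [hL]
  have htri := l2_norm_triangle A (fun i => α • e i)
  have hesmul : Real.sqrt (∑ i, ‖α • e i‖ ^ 2) = α * Real.sqrt (∑ i, ‖e i‖ ^ 2) := by
    have h1 : (∑ i, ‖α • e i‖ ^ 2) = α ^ 2 * ∑ i, ‖e i‖ ^ 2 := by
      rw [Finset.mul_sum]
      apply Finset.sum_congr rfl
      intro i _
      rw [norm_smul, Real.norm_eq_abs, abs_of_pos hα0, mul_pow]
    rw [h1, Real.sqrt_mul (sq_nonneg α), Real.sqrt_sq hα0.le]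
  -- the main spectral bound
  have hAb : Real.sqrt (∑ i, ‖A i‖ ^ 2) ≤ (1 + β) / 2 * Real.sqrt (∑ i, ‖y i‖ ^ 2) := by
    set vf : Fin d → EuclideanSpace ℝ (Fin M) := fun l => WithLp.toLp 2 (fun i => y i l) with hvf
    have happ : ∀ i l, A i l = (1 / 2 : ℝ) * ((matVec W (vf l) + vf l) i) := by
      intro i l
      simp only [hA]
      simp only [PiLp.smul_apply, PiLp.add_apply, smul_eq_mul, matVec, Matrix.mulVec,
        dotProduct]
      have hsum : (∑ j, W i j • y j) l = ∑ j, W i j * y j l := by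
        rw [WithLp.ofLp_sum, Finset.sum_apply]
        apply Finset.sum_congr rfl
        intro j _
        simp
      rw [hsum, hvf]
      ring
    have hvsum : ∀ l, ∑ i, vf l i = 0 := by
      intro l
      have := congrArg (fun z : EuclideanSpace ℝ (Fin d) => z l) hsumy
      rw [WithLp.ofLp_sum, Finset.sum_apply] at this
      simpa [hvf] using this
    have hsq : (∑ i, ‖A i‖ ^ 2) ≤ ((1 + β) / 2) ^ 2 * ∑ i, ‖y i‖ ^ 2 := by
      have hlhs : (∑ i, ‖A i‖ ^ 2) =
          ∑ l, (1 / 4 : ℝ) * ‖matVec W (vf l) + vf l‖ ^ 2 := by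
        rw [Finset.sum_congr rfl fun i (_ : i ∈ Finset.univ) => euclid_norm_sq (A i)]
        rw [Finset.sum_comm]
        apply Finset.sum_congr rfl
        intro l _
        rw [euclid_norm_sq, Finset.mul_sum]
        apply Finset.sum_congr rfl
        intro i _
        rw [happ i l]
        ring
      have hrhs : (∑ i, ‖y i‖ ^ 2) = ∑ l, ‖vf l‖ ^ 2 := by
        rw [Finset.sum_congr rfl fun i (_ : i ∈ Finset.univ) => euclid_norm_sq (y i)]
        rw [Finset.sum_comm]
        apply Finset.sum_congr rfl
        intro l _
        rw [euclid_norm_sq]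
      rw [hlhs, hrhs, Finset.mul_sum]
      apply Finset.sum_le_sum
      intro l _
      have hb := spec_bound hM W hWs hWrow μ u hu hWeig hμmono hμ0 β hβ (vf l) (hvsum l)
      have h0 : (0:ℝ) ≤ (1 + β) * ‖vf l‖ := by positivity
      nlinarith [norm_nonneg (matVec W (vf l) + vf l), norm_nonneg (vf l)]
    have h1 := Real.sqrt_le_sqrt hsq
    rwa [Real.sqrt_mul (by positivity), Real.sqrt_sq (by positivity)] at h1
  show Real.sqrt (∑ i, ‖A i + α • e i‖ ^ 2) ≤
      (1 + β) / 2 * Real.sqrt (∑ i, ‖y i‖ ^ 2) + α * Real.sqrt (∑ i, ‖e i‖ ^ 2)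
  calc Real.sqrt (∑ i, ‖A i + α • e i‖ ^ 2)
      ≤ Real.sqrt (∑ i, ‖A i‖ ^ 2) + Real.sqrt (∑ i, ‖α • e i‖ ^ 2) := htri
    _ ≤ (1 + β) / 2 * Real.sqrt (∑ i, ‖y i‖ ^ 2) + α * Real.sqrt (∑ i, ‖e i‖ ^ 2) := by
        rw [hesmul]
        exact add_le_add hAb le_rfl
end
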